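/- Let Λ be an infinite well-ordered set of cardinality β such that for every a ∈ Λ, the set of strict predecessors of a has cardinality strictly less than β. Then every subset X ⊆ Λ of cardinality β can be written as a disjoint union of β sets X_a, indexed by a ∈ Λ, such that |X_a| = β and every element of X_a is ≥ a. -/

import Mathlib

/-- If `Λ` is an infinite well-ordered set of cardinality `β` in which every element has fewer
than `β` strict predecessors, then any subset `X` of cardinality `β` is a disjoint union of `β`
sets `X a` (indexed by `a ∈ Λ`), each of cardinality `β` and with all elements `≥ a`. -/
theorem partition_of_large_subset {Λ : Type*} [LinearOrder Λ] [WellFoundedLT Λ] [Infinite Λ]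
    (hpred : ∀ a : Λ, Cardinal.mk {b : Λ | b < a} < Cardinal.mk Λ)
    (X : Set Λ) (hX : Cardinal.mk X = Cardinal.mk Λ) :
    ∃ f : Λ → Set Λ,
      (∀ a, f a ⊆ X) ∧
      (Pairwise fun a b => Disjoint (f a) (f b)) ∧
      (⋃ a, f a) = X ∧
      (∀ a, Cardinal.mk (f a) = Cardinal.mk Λ) ∧
      (∀ a, ∀ b ∈ f a, a ≤ b) := by
  classical
  have hκinf : Cardinal.aleph0 ≤ Cardinal.mk Λ := Cardinal.infinite_iff.mp ‹Infinite Λ›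
  have hXΛ2 : Cardinal.mk X = Cardinal.mk (Λ × Λ) := by
    rw [Cardinal.mk_prod]
    simp only [Cardinal.lift_id]
    rw [Cardinal.mul_eq_self hκinf, hX]
  obtain ⟨e⟩ := Cardinal.eq.mp hXΛ2
  set g : X → Λ := fun x => if (e x).1 ≤ (x : Λ) then (e x).1 else (x : Λ) with hg
  have hg_le : ∀ x : X, g x ≤ (x : Λ) := by
    intro x
    by_cases h : (e x).1 ≤ (x : Λ) <;> simp [hg, h]
  refine ⟨fun a => Subtype.val '' (g ⁻¹' {a}), ?_, ?_, ?_, ?_, ?_⟩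
  · rintro a b ⟨x, _, rfl⟩
    exact x.2
  · intro a b hab
    rw [Set.disjoint_left]
    rintro c ⟨x, hx, rfl⟩ ⟨y, hy, hxy⟩
    have hxyeq : y = x := Subtype.ext hxy
    subst hxyeq
    exact hab (hx.symm.trans hy)
  · ext b
    simp only [Set.mem_iUnion, Set.mem_image, Set.mem_preimage, Set.mem_singleton_iff]
    constructor
    · rintro ⟨a, x, _, rfl⟩; exact x.2
    · intro hb; exact ⟨g ⟨b, hb⟩, ⟨b, hb⟩, rfl, rfl⟩
  · intro a
    apply le_antisymm
    · exact Cardinal.mk_set_le _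
    · -- lower bound
      set S : Set X := {x : X | (e x).1 = a ∧ a ≤ (x : Λ)} with hS
      set T : Set X := {x : X | (e x).1 = a} with hT
      have hTS : T \ S ⊆ {x : X | (x : Λ) < a} := by
        rintro x ⟨hx1, hx2⟩
        simp only [hS, Set.mem_setOf_eq, not_and] at hx2
        exact lt_of_not_ge (hx2 hx1)
      have hsmall : Cardinal.mk (T \ S : Set X) < Cardinal.mk Λ := by
        refine lt_of_le_of_lt ?_ (hpred a)
        refine Cardinal.mk_le_of_injective
          (f := fun x : (T \ S : Set X) => (⟨(x : X), hTS x.2⟩ : {b : Λ | b < a})) ?_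
        intro x y hxy
        simp only [Subtype.mk.injEq] at hxy
        exact Subtype.ext (Subtype.ext hxy)
      have hTcard : Cardinal.mk T = Cardinal.mk Λ := by
        have e1 : T ≃ {p : Λ × Λ // p.1 = a} := by
          refine (e.subtypeEquiv ?_)
          intro x
          rfl
        have e2 : {p : Λ × Λ // p.1 = a} ≃ Λ :=
          { toFun := fun p => p.1.2
            invFun := fun b => ⟨(a, b), rfl⟩
            left_inv := by rintro ⟨⟨p1, p2⟩, rfl⟩; rfl
            right_inv := fun b => rfl }
        exact Cardinal.mk_congr (e1.trans e2)
      have hScard : Cardinal.mk Λ ≤ Cardinal.mk S := by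
        by_contra hlt
        push_neg at hlt
        have hUnion : T ⊆ S ∪ (T \ S) := by
          intro x hx
          by_cases hxS : x ∈ S
          · exact Or.inl hxS
          · exact Or.inr ⟨hx, hxS⟩
        have : Cardinal.mk T < Cardinal.mk Λ := by
          calc Cardinal.mk T ≤ Cardinal.mk (S ∪ (T \ S) : Set X) :=
                Cardinal.mk_le_mk_of_subset hUnion
            _ ≤ Cardinal.mk S + Cardinal.mk (T \ S : Set X) := Cardinal.mk_union_le _ _
            _ < Cardinal.mk Λ := Cardinal.add_lt_of_lt hκinf hlt hsmall
        exact absurd hTcard (ne_of_lt this)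
      refine le_trans hScard ?_
      have key : ∀ x : S, (x : X) ∈ g ⁻¹' {a} := by
        rintro ⟨x, h1, h2⟩
        simp only [Set.mem_preimage, Set.mem_singleton_iff, hg]
        rw [if_pos (h1 ▸ h2)]
        exact h1
      refine Cardinal.mk_le_of_injective
        (f := fun x : S => (⟨((x : X) : Λ), ⟨(x : X), key x, rfl⟩⟩ :
          (Subtype.val '' (g ⁻¹' {a}) : Set Λ))) ?_
      intro x y hxy
      simp only [Subtype.mk.injEq] at hxy
      have hxy' := congrArg Subtype.val hxy
      exact Subtype.ext (Subtype.ext hxy')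
  · rintro a b ⟨x, hx, rfl⟩
    simp only [Set.mem_preimage, Set.mem_singleton_iff] at hx
    calc a = g x := hx.symm
      _ ≤ (x : Λ) := hg_le x
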